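/- Let D be an n×n symmetric positive semidefinite matrix, B symmetric, τ, σ > 0, and suppose DBD + τ^{-1}D(I − D) ⪰ σD². Then there exist ε₁, ε₂ > 0 such that for every symmetric positive semidefinite D̃ with ‖D̃ − D‖ < ε₁ and every symmetric B̃ with ‖B̃ − B‖ < ε₂, one has D̃B̃D̃ + τ^{-1}D̃(I − D̃) ⪰ (σ/4)·D̃². -/

import Mathlib

open scoped RealInnerProductSpace Matrix

set_option maxHeartbeats 4000000
set_option synthInstance.maxHeartbeats 400000

noncomputable section

variable {n : ℕ}

local notation "En" => EuclideanSpace ℝ (Fin n)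

-- helper: operator inner bound
private lemma inner_op_bound (A : En →L[ℝ] En) (y z : En) :
    |⟪y, A z⟫| ≤ ‖A‖ * ‖y‖ * ‖z‖ := by
  calc |⟪y, A z⟫| ≤ ‖y‖ * ‖A z‖ := abs_real_inner_le_norm y (A z)
    _ ≤ ‖y‖ * (‖A‖ * ‖z‖) := by
        exact mul_le_mul_of_nonneg_left (A.le_opNorm z) (norm_nonneg y)
    _ = ‖A‖ * ‖y‖ * ‖z‖ := by ring

theorem key_abstract (τ σ : ℝ) (hτ : 0 < τ) (hσ : 0 < σ)
    (T B : En →L[ℝ] En)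
    (hyp : ∀ y, σ * ‖T y‖ ^ 2 ≤ ⟪T y, B (T y)⟫ + τ⁻¹ * (⟪y, T y⟫ - ‖T y‖ ^ 2)) :
    ∃ ε₁ > (0 : ℝ), ∃ ε₂ > (0 : ℝ),
      ∀ T' B' : En →L[ℝ] En,
        IsSelfAdjoint T' → (∀ y, 0 ≤ ⟪y, T' y⟫) →
        ‖T' - T‖ < ε₁ → ‖B' - B‖ < ε₂ →
        ∀ x, σ / 4 * ‖T' x‖ ^ 2 ≤ ⟪T' x, B' (T' x)⟫ + τ⁻¹ * (⟪x, T' x⟫ - ‖T' x‖ ^ 2) := by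
  have hτi : (0 : ℝ) < τ⁻¹ := inv_pos.mpr hτ
  set K : ℝ := ‖B‖ + 1 with hKdef
  have hK1 : (1 : ℝ) ≤ K := le_add_of_nonneg_left (norm_nonneg B)
  have hKpos : (0 : ℝ) < K := lt_of_lt_of_le one_pos hK1
  set δ : ℝ := τ⁻¹ / (τ⁻¹ + K + 8 * K ^ 2 / σ + σ) with hδdef
  have hden : (0 : ℝ) < τ⁻¹ + K + 8 * K ^ 2 / σ + σ := by positivity
  have hδpos : (0 : ℝ) < δ := div_pos hτi hden
  have hδinv : τ⁻¹ / δ = τ⁻¹ + K + 8 * K ^ 2 / σ + σ := by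
    rw [hδdef]; field_simp
  set Cerr : ℝ := (9/4) * (K / δ) + τ⁻¹ / δ ^ 2 + (9/4) * (τ⁻¹ / δ) with hCdef
  have hCpos : (0 : ℝ) < Cerr := by positivity
  have hBK : ‖B‖ ≤ K := le_add_of_nonneg_right zero_le_one
  have hKeq : K = ‖B‖ + 1 := hKdef
  have hCeq : Cerr = (9/4) * (K/δ) + τ⁻¹/δ^2 + (9/4) * (τ⁻¹/δ) := hCdef
  clear hKdef hδdef hCdef
  clear_value Cerr δ K
  refine ⟨min (δ/4) (σ/(8*Cerr)), by positivity, min 1 (σ/16), by positivity, ?_⟩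
  intro T' B' hsa hpsd hT'n hB'n x
  have hε₁δ : ‖T' - T‖ ≤ δ/4 := (lt_of_lt_of_le hT'n (min_le_left _ _)).le
  have hε₁C : ‖T' - T‖ * Cerr ≤ σ/8 := by
    have h1 : ‖T' - T‖ ≤ σ/(8*Cerr) := (lt_of_lt_of_le hT'n (min_le_right _ _)).le
    calc ‖T' - T‖ * Cerr ≤ (σ/(8*Cerr)) * Cerr :=
          mul_le_mul_of_nonneg_right h1 hCpos.le
      _ = σ/8 := by field_simp
  have hε₂σ : ‖B' - B‖ ≤ σ/16 := (lt_of_lt_of_le hB'n (min_le_right _ _)).le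
  have hε₂1 : ‖B' - B‖ ≤ 1 := (lt_of_lt_of_le hB'n (min_le_left _ _)).le
  have hB'K : ‖B'‖ ≤ K := by
    calc ‖B'‖ = ‖B + (B' - B)‖ := by congr 1; abel
      _ ≤ ‖B‖ + ‖B' - B‖ := norm_add_le _ _
      _ ≤ ‖B‖ + 1 := by linarith
      _ = K := hKeq.symm
  -- spectral decomposition of T'
  have hsym : (T' : En →ₗ[ℝ] En).IsSymmetric := hsa.isSymmetric
  have hfr : Module.finrank ℝ En = n := finrank_euclideanSpace_fin
  set b := hsym.eigenvectorBasis hfr with hbdef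
  set μ := hsym.eigenvalues hfr with hμdef
  have hμap : ∀ (v : En) i, b.repr (T' v) i = μ i * b.repr v i := fun v i =>
    hsym.eigenvectorBasis_apply_self_apply hfr v i
  have key_inner : ∀ u w : En, ⟪u, w⟫ = ∑ i, b.repr u i * b.repr w i := by
    intro u w
    have h1 : ⟪u, w⟫ = ⟪b.repr u, b.repr w⟫ := (b.repr.inner_map_map u w).symm
    rw [h1, PiLp.inner_apply]
    simp [RCLike.inner_apply, conj_trivial]
    exact Finset.sum_congr rfl fun i _ => mul_comm _ _
  have key_norm : ∀ u : En, ‖u‖ ^ 2 = ∑ i, (b.repr u i) ^ 2 := by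
    intro u
    rw [← real_inner_self_eq_norm_sq, key_inner]
    exact Finset.sum_congr rfl fun i _ => (sq (b.repr u i)).symm
  have hμ0 : ∀ i, 0 ≤ μ i := by
    intro i
    have h2 : T' (b i) = μ i • b i := hsym.apply_eigenvectorBasis hfr i
    have h1 := hpsd (b i)
    rw [h2, real_inner_smul_right, real_inner_self_eq_norm_sq, b.orthonormal.1 i] at h1
    simpa using h1
  clear_value μ b
  -- split x
  set p : En := b.repr.symm ((WithLp.equiv 2 _).symm fun i => if δ ≤ μ i then b.repr x i else 0)
    with hpdef
  set q : En := x - p with hqdef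
  have hcp : ∀ i, b.repr p i = if δ ≤ μ i then b.repr x i else 0 := by
    intro i
    rw [hpdef, LinearIsometryEquiv.apply_symm_apply]
    rfl
  have hcq : ∀ i, b.repr q i = if δ ≤ μ i then 0 else b.repr x i := by
    intro i
    have h0 : b.repr q = b.repr x - b.repr p := by rw [hqdef, map_sub]
    have : b.repr q i = b.repr x i - b.repr p i := by rw [h0]; rfl
    rw [this, hcp]; split_ifs <;> ring
  have hvw : ⟪T' p, T' q⟫ = 0 := by
    rw [key_inner]
    refine Finset.sum_eq_zero fun i _ => ?_
    rw [hμap, hμap, hcp, hcq]; split_ifs <;> ring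
  have hpw : ⟪p, T' q⟫ = 0 := by
    rw [key_inner]
    refine Finset.sum_eq_zero fun i _ => ?_
    rw [hμap, hcp, hcq]; split_ifs <;> ring
  have hqv : ⟪q, T' p⟫ = 0 := by
    rw [key_inner]
    refine Finset.sum_eq_zero fun i _ => ?_
    rw [hμap, hcp, hcq]; split_ifs <;> ring
  have hqq : ‖T' q‖ ^ 2 ≤ δ * ⟪q, T' q⟫ := by
    rw [key_norm, key_inner, Finset.mul_sum]
    refine Finset.sum_le_sum fun i _ => ?_
    rw [hμap, hcq]
    split_ifs with h
    · simp
    · push_neg at h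
      have h0 := hμ0 i
      nlinarith [sq_nonneg (b.repr x i), mul_nonneg (mul_nonneg (sub_nonneg.mpr h.le) h0) (sq_nonneg (b.repr x i))]
  have hpp : δ ^ 2 * ‖p‖ ^ 2 ≤ ‖T' p‖ ^ 2 := by
    rw [key_norm, key_norm, Finset.mul_sum]
    refine Finset.sum_le_sum fun i _ => ?_
    rw [hμap, hcp]
    split_ifs with h
    · nlinarith [mul_nonneg (mul_nonneg (sub_nonneg.mpr h)
        (by linarith [hμ0 i] : (0:ℝ) ≤ μ i + δ)) (sq_nonneg (b.repr x i))]
    · simp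
  have hδP : δ * ‖p‖ ≤ ‖T' p‖ := by
    nlinarith [hpp, norm_nonneg (T' p), norm_nonneg p, hδpos.le,
      mul_nonneg hδpos.le (norm_nonneg p)]
  -- decomposition identities
  have hxpq : x = p + q := by rw [hqdef]; abel
  clear hpdef hqdef
  clear_value q p
  have hTx : T' x = T' p + T' q := by rw [hxpq, map_add]
  have hnx : ‖T' x‖ ^ 2 = ‖T' p‖ ^ 2 + ‖T' q‖ ^ 2 := by
    rw [hTx, norm_add_sq_real, hvw]; ring
  have hxTx : ⟪x, T' x⟫ = ⟪p, T' p⟫ + ⟪q, T' q⟫ := by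
    conv_lhs => rw [hxpq]
    rw [map_add, inner_add_left, inner_add_right, inner_add_right, hpw, hqv]; ring
  have hBx : ⟪T' x, B' (T' x)⟫ = ⟪T' p, B' (T' p)⟫ + ⟪T' p, B' (T' q)⟫
      + ⟪T' q, B' (T' p)⟫ + ⟪T' q, B' (T' q)⟫ := by
    rw [hTx, map_add, inner_add_left, inner_add_right, inner_add_right]; ring
  -- cross and small-eigenvalue bounds
  have hF1 : -(K * ‖T' q‖ ^ 2) ≤ ⟪T' q, B' (T' q)⟫ := by
    have h1 := (abs_le.mp (inner_op_bound B' (T' q) (T' q))).1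
    have h2 : ‖B'‖ * ‖T' q‖ * ‖T' q‖ ≤ K * ‖T' q‖ ^ 2 := by
      have := mul_le_mul_of_nonneg_right (mul_le_mul_of_nonneg_right hB'K (norm_nonneg (T' q)))
        (norm_nonneg (T' q))
      linarith [sq_nonneg ‖T' q‖]
    linarith
  have hF2 : -(K * (‖T' p‖ * ‖T' q‖)) ≤ ⟪T' p, B' (T' q)⟫ := by
    have h1 := (abs_le.mp (inner_op_bound B' (T' p) (T' q))).1
    have h2 : ‖B'‖ * ‖T' p‖ * ‖T' q‖ ≤ K * (‖T' p‖ * ‖T' q‖) := by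
      have := mul_le_mul_of_nonneg_right (mul_le_mul_of_nonneg_right hB'K (norm_nonneg (T' p)))
        (norm_nonneg (T' q))
      linarith
    linarith
  have hF3 : -(K * (‖T' p‖ * ‖T' q‖)) ≤ ⟪T' q, B' (T' p)⟫ := by
    have h1 := (abs_le.mp (inner_op_bound B' (T' q) (T' p))).1
    have h2 : ‖B'‖ * ‖T' q‖ * ‖T' p‖ ≤ K * (‖T' p‖ * ‖T' q‖) := by
      have := mul_le_mul_of_nonneg_right (mul_le_mul_of_nonneg_right hB'K (norm_nonneg (T' q)))
        (norm_nonneg (T' p))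
      linarith
    linarith
  have hF4 : 2 * (K * (‖T' p‖ * ‖T' q‖)) ≤ σ/8 * ‖T' p‖ ^ 2 + 8 * K ^ 2 / σ * ‖T' q‖ ^ 2 := by
    rw [← sub_nonneg]
    have hG : σ/8 * ‖T' p‖ ^ 2 + 8 * K ^ 2 / σ * ‖T' q‖ ^ 2 - 2 * (K * (‖T' p‖ * ‖T' q‖))
        = (σ * ‖T' p‖ - 8 * K * ‖T' q‖) ^ 2 / (8 * σ) := by
      field_simp
      ring
    rw [hG]
    exact div_nonneg (sq_nonneg _) (by linarith)
  have hF5 : (τ⁻¹ + K + 8 * K ^ 2 / σ + σ) * ‖T' q‖ ^ 2 ≤ τ⁻¹ * ⟪q, T' q⟫ := by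
    have h1 : (τ⁻¹/δ) * ‖T' q‖ ^ 2 ≤ (τ⁻¹/δ) * (δ * ⟪q, T' q⟫) :=
      mul_le_mul_of_nonneg_left hqq (by positivity)
    have h2 : (τ⁻¹/δ) * (δ * ⟪q, T' q⟫) = τ⁻¹ * ⟪q, T' q⟫ := by
      rw [div_mul_eq_mul_div, mul_comm δ _, ← mul_assoc, mul_div_assoc,
        div_self hδpos.ne', mul_one]
    rw [← hδinv]
    linarith
  -- main estimate on the large-eigenvalue part
  have hF6 : 3 * σ / 8 * ‖T' p‖ ^ 2 ≤ ⟪T' p, B' (T' p)⟫ + τ⁻¹ * (⟪p, T' p⟫ - ‖T' p‖ ^ 2) := by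
    have hd : ‖T' p - T p‖ ≤ ‖T' - T‖ * ‖p‖ := by
      have := (T' - T).le_opNorm p
      simpa [ContinuousLinearMap.sub_apply] using this
    have hPa : δ * ‖p‖ ≤ ‖T' p‖ := hδP
    have hPad : ‖p‖ ≤ ‖T' p‖ / δ := by
      rw [le_div_iff₀ hδpos]; linarith [hPa]
    have hda : ‖T' p - T p‖ ≤ ‖T' p‖ / 4 := by
      calc ‖T' p - T p‖ ≤ ‖T' - T‖ * ‖p‖ := hd
        _ ≤ (δ/4) * ‖p‖ := mul_le_mul_of_nonneg_right hε₁δ (norm_nonneg p)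
        _ = (δ * ‖p‖)/4 := by ring
        _ ≤ ‖T' p‖ / 4 := by linarith
    have hdad : ‖T' p - T p‖ ≤ ‖T' - T‖ * (‖T' p‖ / δ) := by
      calc ‖T' p - T p‖ ≤ ‖T' - T‖ * ‖p‖ := hd
        _ ≤ ‖T' - T‖ * (‖T' p‖ / δ) :=
            mul_le_mul_of_nonneg_left hPad (norm_nonneg _)
    have hnu1 : 3/4 * ‖T' p‖ ≤ ‖T p‖ := by
      have := norm_sub_norm_le (T' p) (T p)
      linarith
    have hnu2 : ‖T p‖ ≤ 5/4 * ‖T' p‖ := by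
      have := norm_sub_norm_le (T p) (T' p)
      rw [norm_sub_rev] at this
      linarith
    have hhyp := hyp p
    -- E1 : replace B' by B
    have hE1 : ⟪T' p, B (T' p)⟫ - σ/16 * ‖T' p‖ ^ 2 ≤ ⟪T' p, B' (T' p)⟫ := by
      have h1 : ⟪T' p, B' (T' p)⟫ - ⟪T' p, B (T' p)⟫ = ⟪T' p, (B' - B) (T' p)⟫ := by
        rw [ContinuousLinearMap.sub_apply, inner_sub_right]
      have h2 := (abs_le.mp (inner_op_bound (B' - B) (T' p) (T' p))).1
      have h3 : ‖B' - B‖ * ‖T' p‖ * ‖T' p‖ ≤ σ/16 * ‖T' p‖ ^ 2 := by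
        have := mul_le_mul_of_nonneg_right (mul_le_mul_of_nonneg_right hε₂σ (norm_nonneg (T' p)))
          (norm_nonneg (T' p))
        linarith
      linarith
    -- E2 : replace T' p by T p in the B-form
    have hE2 : ⟪T p, B (T p)⟫ - (9/4) * (K/δ) * ‖T' - T‖ * ‖T' p‖ ^ 2 ≤ ⟪T' p, B (T' p)⟫ := by
      have h1 : ⟪T' p, B (T' p)⟫ - ⟪T p, B (T p)⟫
          = ⟪T' p - T p, B (T' p)⟫ + ⟪T p, B (T' p - T p)⟫ := by
        rw [map_sub, inner_sub_left, inner_sub_right]; ring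
      have h2 := (abs_le.mp (inner_op_bound B (T' p - T p) (T' p))).1
      have h3 := (abs_le.mp (inner_op_bound B (T p) (T' p - T p))).1
      have c1 : ‖B‖ * ‖T' p - T p‖ * ‖T' p‖ ≤ K * (‖T' - T‖ * (‖T' p‖/δ)) * ‖T' p‖ := by
        have u1 : ‖B‖ * ‖T' p - T p‖ ≤ K * (‖T' - T‖ * (‖T' p‖/δ)) :=
          mul_le_mul hBK hdad (norm_nonneg _) hKpos.le
        exact mul_le_mul_of_nonneg_right u1 (norm_nonneg _)
      have c2 : ‖B‖ * ‖T p‖ * ‖T' p - T p‖ ≤ K * (5/4 * ‖T' p‖) * (‖T' - T‖ * (‖T' p‖/δ)) := by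
        have u1 : ‖B‖ * ‖T p‖ ≤ K * (5/4 * ‖T' p‖) :=
          mul_le_mul hBK hnu2 (norm_nonneg _) hKpos.le
        exact mul_le_mul u1 hdad (norm_nonneg _) (by positivity)
      have e1 : K * (‖T' - T‖ * (‖T' p‖/δ)) * ‖T' p‖ + K * (5/4 * ‖T' p‖) * (‖T' - T‖ * (‖T' p‖/δ))
          = (9/4) * (K/δ) * ‖T' - T‖ * ‖T' p‖ ^ 2 := by ring
      linarith
    -- E3 : replace T' p by T p inside the inner with p
    have hE3 : τ⁻¹ * ⟪p, T p⟫ - (τ⁻¹/δ^2) * ‖T' - T‖ * ‖T' p‖ ^ 2 ≤ τ⁻¹ * ⟪p, T' p⟫ := by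
      have h1 : ⟪p, T' p⟫ - ⟪p, T p⟫ = ⟪p, T' p - T p⟫ := (inner_sub_right p (T' p) (T p)).symm
      have h2 := (abs_le.mp (abs_real_inner_le_norm p (T' p - T p))).1
      have c1 : ‖p‖ * ‖T' p - T p‖ ≤ (‖T' p‖/δ) * (‖T' - T‖ * (‖T' p‖/δ)) :=
        mul_le_mul hPad hdad (norm_nonneg _) (by positivity)
      have h4 : ⟪p, T p⟫ - (‖T' p‖/δ) * (‖T' - T‖ * (‖T' p‖/δ)) ≤ ⟪p, T' p⟫ := by linarith
      have h5 := mul_le_mul_of_nonneg_left h4 hτi.le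
      have h6 : τ⁻¹ * (⟪p, T p⟫ - (‖T' p‖/δ) * (‖T' - T‖ * (‖T' p‖/δ)))
          = τ⁻¹ * ⟪p, T p⟫ - (τ⁻¹/δ^2) * ‖T' - T‖ * ‖T' p‖ ^ 2 := by ring
      linarith
    -- E4 : norm comparison
    have hE4 : -((9/4) * (τ⁻¹/δ) * ‖T' - T‖ * ‖T' p‖ ^ 2) ≤ τ⁻¹ * ‖T p‖ ^ 2 - τ⁻¹ * ‖T' p‖ ^ 2 := by
      have h1 : ‖T' p‖ - ‖T p‖ ≤ ‖T' p - T p‖ := norm_sub_norm_le (T' p) (T p)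
      have h3 : (‖T' p‖ + ‖T p‖) * (‖T' p‖ - ‖T p‖)
          ≤ (9/4 * ‖T' p‖) * (‖T' - T‖ * (‖T' p‖/δ)) := by
        rcases le_or_gt (‖T' p‖ - ‖T p‖) 0 with h | h
        · have h4 : (‖T' p‖ + ‖T p‖) * (‖T' p‖ - ‖T p‖) ≤ 0 :=
            mul_nonpos_of_nonneg_of_nonpos (by positivity) h
          have h5 : (0:ℝ) ≤ (9/4 * ‖T' p‖) * (‖T' - T‖ * (‖T' p‖/δ)) := by positivity
          linarith
        · exact mul_le_mul (by linarith) (le_trans h1 hdad) h.le (by positivity)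
      have h4 := mul_le_mul_of_nonneg_left h3 hτi.le
      have h5 : τ⁻¹ * ((9/4 * ‖T' p‖) * (‖T' - T‖ * (‖T' p‖/δ)))
          = (9/4) * (τ⁻¹/δ) * ‖T' - T‖ * ‖T' p‖ ^ 2 := by ring
      have h6 : τ⁻¹ * ((‖T' p‖ + ‖T p‖) * (‖T' p‖ - ‖T p‖))
          = τ⁻¹ * ‖T' p‖ ^ 2 - τ⁻¹ * ‖T p‖ ^ 2 := by ring
      linarith
    -- A5
    have hA5 : 9/16 * σ * ‖T' p‖ ^ 2 ≤ σ * ‖T p‖ ^ 2 := by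
      have h1 : (3/4 * ‖T' p‖) * (3/4 * ‖T' p‖) ≤ ‖T p‖ * ‖T p‖ :=
        mul_le_mul hnu1 hnu1 (by positivity) (le_trans (by positivity) hnu1)
      have h2 := mul_le_mul_of_nonneg_left h1 hσ.le
      have h3 : σ * ((3/4 * ‖T' p‖) * (3/4 * ‖T' p‖)) = 9/16 * σ * ‖T' p‖ ^ 2 := by ring
      have h4 : σ * (‖T p‖ * ‖T p‖) = σ * ‖T p‖ ^ 2 := by ring
      linarith
    -- coefficient bound
    have hcoef : ((9/4) * (K/δ) + τ⁻¹/δ^2 + (9/4) * (τ⁻¹/δ)) * ‖T' - T‖ * ‖T' p‖ ^ 2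
        ≤ σ/8 * ‖T' p‖ ^ 2 := by
      have h1 := mul_le_mul_of_nonneg_right hε₁C (sq_nonneg ‖T' p‖)
      have h2 : ‖T' - T‖ * Cerr * ‖T' p‖ ^ 2
          = ((9/4) * (K/δ) + τ⁻¹/δ^2 + (9/4) * (τ⁻¹/δ)) * ‖T' - T‖ * ‖T' p‖ ^ 2 := by
        rw [hCeq]; ring
      linarith
    linarith [hE1, hE2, hE3, hE4, hA5, hhyp, hcoef]
  -- assemble
  have hqnn : (0:ℝ) ≤ σ * ‖T' q‖ ^ 2 := by positivity
  rw [hnx, hxTx, hBx]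
  linarith [hF1, hF2, hF3, hF4, hF5, hF6, hqnn]

private lemma herm_of_symm {M : Matrix (Fin n) (Fin n) ℝ} (h : M.IsSymm) : M.IsHermitian := by
  show Mᴴ = M
  ext i j
  rw [Matrix.conjTranspose_apply, star_trivial]
  calc M j i = Mᵀ i j := (Matrix.transpose_apply M i j).symm
    _ = M i j := by rw [h]

private lemma herm_expr (c₁ c₂ : ℝ) {Dm Bm : Matrix (Fin n) (Fin n) ℝ}
    (hDm : Dm.IsHermitian) (hBm : Bm.IsHermitian) :
    (Dm * Bm * Dm + c₁ • (Dm * (1 - Dm)) - c₂ • (Dm * Dm)).IsHermitian := by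
  have hDe : Dmᴴ = Dm := hDm
  have hBe : Bmᴴ = Bm := hBm
  have hDD : (Dm * Dm).IsHermitian := by
    show (Dm * Dm)ᴴ = Dm * Dm
    rw [Matrix.conjTranspose_mul, hDe]
  have h1 : (Dm * Bm * Dm).IsHermitian := by
    show (Dm * Bm * Dm)ᴴ = Dm * Bm * Dm
    rw [Matrix.conjTranspose_mul, Matrix.conjTranspose_mul, hDe, hBe, ← Matrix.mul_assoc]
  have h2 : (Dm * (1 - Dm)).IsHermitian := by
    have e : Dm * (1 - Dm) = Dm - Dm * Dm := by noncomm_ring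
    rw [e]; exact hDm.sub hDD
  have hs1 : (c₁ • (Dm * (1 - Dm))).IsHermitian := by
    show (c₁ • (Dm * (1 - Dm)))ᴴ = c₁ • (Dm * (1 - Dm))
    rw [Matrix.conjTranspose_smul, star_trivial, h2]
  have hs2 : (c₂ • (Dm * Dm)).IsHermitian := by
    show (c₂ • (Dm * Dm))ᴴ = c₂ • (Dm * Dm)
    rw [Matrix.conjTranspose_smul, star_trivial, hDD]
  exact (h1.add hs1).sub hs2

private lemma sa_clm {M : Matrix (Fin n) (Fin n) ℝ} (hM : M.IsHermitian) :
    IsSelfAdjoint (Matrix.toEuclideanCLM (𝕜 := ℝ) M) := by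
  rw [IsSelfAdjoint, ← map_star]
  exact congrArg _ hM

private lemma psd_quad {M : Matrix (Fin n) (Fin n) ℝ} (h : M.PosSemidef) (y : En) :
    0 ≤ ⟪y, Matrix.toEuclideanCLM (𝕜 := ℝ) M y⟫ := by
  have h2 := h.dotProduct_mulVec_nonneg ((WithLp.equiv 2 _) y)
  rw [EuclideanSpace.inner_eq_star_dotProduct]
  simpa [Matrix.ofLp_toEuclideanCLM, Matrix.toLin'_apply, dotProduct_comm] using h2

private lemma psd_mk {M : Matrix (Fin n) (Fin n) ℝ} (hM : M.IsHermitian)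
    (h : ∀ y : En, 0 ≤ ⟪y, Matrix.toEuclideanCLM (𝕜 := ℝ) M y⟫) : M.PosSemidef := by
  refine Matrix.PosSemidef.of_dotProduct_mulVec_nonneg hM fun v => ?_
  have h2 := h ((WithLp.equiv 2 _).symm v)
  simpa [EuclideanSpace.inner_toLp_toLp, Matrix.toEuclideanCLM_toLp,
    Matrix.toLin'_apply, dotProduct_comm] using h2

private lemma quad_expand (c₁ c₂ : ℝ) (Dm Bm : Matrix (Fin n) (Fin n) ℝ)
    (hDm : Dm.IsHermitian) (y : En) :
    ⟪y, Matrix.toEuclideanCLM (𝕜 := ℝ) (Dm * Bm * Dm + c₁ • (Dm * (1 - Dm)) - c₂ • (Dm * Dm)) y⟫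
      = ⟪Matrix.toEuclideanCLM (𝕜 := ℝ) Dm y,
          Matrix.toEuclideanCLM (𝕜 := ℝ) Bm (Matrix.toEuclideanCLM (𝕜 := ℝ) Dm y)⟫
        + c₁ * (⟪y, Matrix.toEuclideanCLM (𝕜 := ℝ) Dm y⟫
            - ‖Matrix.toEuclideanCLM (𝕜 := ℝ) Dm y‖ ^ 2)
        - c₂ * ‖Matrix.toEuclideanCLM (𝕜 := ℝ) Dm y‖ ^ 2 := by
  have hsa := sa_clm hDm
  have hsymm := hsa.isSymmetric
  set TD := Matrix.toEuclideanCLM (𝕜 := ℝ) Dm with hTD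
  set TB := Matrix.toEuclideanCLM (𝕜 := ℝ) Bm with hTB
  have hmap : Matrix.toEuclideanCLM (𝕜 := ℝ)
        (Dm * Bm * Dm + c₁ • (Dm * (1 - Dm)) - c₂ • (Dm * Dm))
      = TD * TB * TD + c₁ • (TD * (1 - TD)) - c₂ • (TD * TD) := by
    rw [map_sub, map_add, map_mul, map_mul, map_smul, map_smul, map_mul, map_mul, map_sub, map_one]
  rw [hmap]
  simp only [ContinuousLinearMap.sub_apply, ContinuousLinearMap.add_apply,
    ContinuousLinearMap.smul_apply, ContinuousLinearMap.mul_apply, ContinuousLinearMap.one_apply]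
  rw [inner_sub_right, inner_add_right, real_inner_smul_right, real_inner_smul_right]
  have hsym' : ∀ u w : En, ⟪TD u, w⟫ = ⟪u, TD w⟫ := fun u w => hsymm u w
  have e1 : ⟪y, TD (TB (TD y))⟫ = ⟪TD y, TB (TD y)⟫ := (hsym' y (TB (TD y))).symm
  have e3 : ⟪y, TD (TD y)⟫ = ‖TD y‖ ^ 2 := by
    rw [← hsym' y (TD y), real_inner_self_eq_norm_sq]
  have e2 : ⟪y, TD (y - TD y)⟫ = ⟪y, TD y⟫ - ‖TD y‖ ^ 2 := by
    rw [map_sub, inner_sub_right, e3]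
  rw [e1, e2, e3]

/-- the condition `DBD + τ⁻¹D(I−D) ⪰ σD²` is stable (with constant `σ/4`)
under small perturbations of `D` (among symmetric PSD matrices) and `B` (among symmetric
matrices) in the spectral norm, here expressed as the operator norm of the associated
Euclidean continuous linear map. -/
theorem stmt_12 {n : ℕ} (τ σ : ℝ) (hτ : 0 < τ) (hσ : 0 < σ)
    (D B : Matrix (Fin n) (Fin n) ℝ) (hD : D.PosSemidef) (hB : B.IsSymm)
    (hineq : (D * B * D + τ⁻¹ • (D * ((1 : Matrix (Fin n) (Fin n) ℝ) - D))
      - σ • (D * D)).PosSemidef) :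
    ∃ ε₁ > (0 : ℝ), ∃ ε₂ > (0 : ℝ),
      ∀ D' B' : Matrix (Fin n) (Fin n) ℝ, D'.PosSemidef → B'.IsSymm →
        ‖Matrix.toEuclideanCLM (𝕜 := ℝ) (D' - D)‖ < ε₁ →
        ‖Matrix.toEuclideanCLM (𝕜 := ℝ) (B' - B)‖ < ε₂ →
        (D' * B' * D' + τ⁻¹ • (D' * ((1 : Matrix (Fin n) (Fin n) ℝ) - D'))
          - (σ / 4) • (D' * D')).PosSemidef := by
  have hyp : ∀ y : EuclideanSpace ℝ (Fin n),
      σ * ‖Matrix.toEuclideanCLM (𝕜 := ℝ) D y‖ ^ 2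
        ≤ ⟪Matrix.toEuclideanCLM (𝕜 := ℝ) D y,
            Matrix.toEuclideanCLM (𝕜 := ℝ) B (Matrix.toEuclideanCLM (𝕜 := ℝ) D y)⟫
          + τ⁻¹ * (⟪y, Matrix.toEuclideanCLM (𝕜 := ℝ) D y⟫
              - ‖Matrix.toEuclideanCLM (𝕜 := ℝ) D y‖ ^ 2) := by
    intro y
    have h0 := psd_quad hineq y
    rw [quad_expand τ⁻¹ σ D B hD.1 y] at h0
    linarith
  obtain ⟨ε₁, hε₁, ε₂, hε₂, hmain⟩ := key_abstract τ σ hτ hσ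
    (Matrix.toEuclideanCLM (𝕜 := ℝ) D) (Matrix.toEuclideanCLM (𝕜 := ℝ) B) hyp
  refine ⟨ε₁, hε₁, ε₂, hε₂, ?_⟩
  intro D' B' hD' hB' h1 h2
  have hB'h : B'.IsHermitian := herm_of_symm hB'
  refine psd_mk (herm_expr τ⁻¹ (σ/4) hD'.1 hB'h) ?_
  intro y
  have h3 := hmain (Matrix.toEuclideanCLM (𝕜 := ℝ) D') (Matrix.toEuclideanCLM (𝕜 := ℝ) B')
    (sa_clm hD'.1) (fun z => psd_quad hD' z)
    (by rwa [← map_sub]) (by rwa [← map_sub]) y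
  rw [quad_expand τ⁻¹ (σ/4) D' B' hD'.1 y]
  linarith

end
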